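/- In the exponential-claims model, the function C(x) = cW_q(x) - Z_q(x) satisfies C(0) = 0, C'(0) = λ/c, and C is strictly increasing on (0,∞). -/

import Mathlib

theorem stmt16 (c lam mu q γ₁ γ₂ : ℝ) (hc : 0 < c) (hlam : 0 < lam) (hmu : 0 < mu) (hq : 0 < q)
    (hγ₂ : γ₂ < 0) (hγ₁ : 0 < γ₁)
    (hroot1 : c * γ₁ ^ 2 + γ₁ * (c * mu - lam - q) - q * mu = 0)
    (hroot2 : c * γ₂ ^ 2 + γ₂ * (c * mu - lam - q) - q * mu = 0)
    (W Z C : ℝ → ℝ)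
    (hW : W = fun x => ((mu + γ₁) * Real.exp (γ₁ * x) - (mu + γ₂) * Real.exp (γ₂ * x)) / (c * (γ₁ - γ₂)))
    (hZ : ∀ x, Z x = 1 + q * ∫ y in (0:ℝ)..x, W y)
    (hC : ∀ x, C x = c * W x - Z x) :
    C 0 = 0 ∧ deriv C 0 = lam / c ∧ StrictMonoOn C (Set.Ioi 0) := by
  have hγ : 0 < γ₁ - γ₂ := by linarith
  have hD : (0:ℝ) < c * (γ₁ - γ₂) := by positivity
  -- algebraic facts about the roots
  have hsum : c * (γ₁ + γ₂) = lam + q - c * mu := by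
    have h := sub_eq_zero.mpr (hroot1.trans hroot2.symm)
    have hne : γ₁ - γ₂ ≠ 0 := ne_of_gt hγ
    field_simp at h ⊢
    nlinarith [h, hγ]
  have hprod : c * (γ₁ * γ₂) = -(q * mu) := by nlinarith [hroot1, hsum]
  have hmug2 : 0 < mu + γ₂ := by
    have key : c * (mu + γ₁) * (mu + γ₂) = mu * lam := by nlinarith [hsum, hprod]
    nlinarith [mul_pos hc (by linarith : (0:ℝ) < mu + γ₁)]
  have hcq : q < c * γ₁ := by
    have key : (q - c * γ₁) * (q - c * γ₂) = -(q * lam) := by nlinarith [hsum, hprod]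
    nlinarith [mul_pos hc (neg_pos.mpr hγ₂)]
  -- derivative data
  set W' : ℝ → ℝ := fun x =>
    ((mu + γ₁) * γ₁ * Real.exp (γ₁ * x) - (mu + γ₂) * γ₂ * Real.exp (γ₂ * x)) / (c * (γ₁ - γ₂))
    with hW'
  have hWd : ∀ x, HasDerivAt W (W' x) x := by
    intro x
    rw [hW]
    have h1 : HasDerivAt (fun x : ℝ => Real.exp (γ₁ * x)) (Real.exp (γ₁ * x) * γ₁) x :=
      by simpa using ((hasDerivAt_id x).const_mul γ₁).exp
    have h2 : HasDerivAt (fun x : ℝ => Real.exp (γ₂ * x)) (Real.exp (γ₂ * x) * γ₂) x :=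
      by simpa using ((hasDerivAt_id x).const_mul γ₂).exp
    have := ((h1.const_mul (mu + γ₁)).sub (h2.const_mul (mu + γ₂))).div_const (c * (γ₁ - γ₂))
    refine HasDerivAt.congr_deriv this ?_
    simp [hW']; ring
  have hWc : Continuous W := by
    rw [hW]; fun_prop
  have hZd : ∀ x, HasDerivAt Z (q * W x) x := by
    intro x
    have h := (hWc.integral_hasStrictDerivAt 0 x).hasDerivAt
    have h2 := (h.const_mul q).const_add 1
    have : Z = fun x => 1 + q * ∫ y in (0:ℝ)..x, W y := funext hZ
    rw [this]
    exact h2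
  have hCd : ∀ x, HasDerivAt C (c * W' x - q * W x) x := by
    intro x
    have : C = fun x => c * W x - Z x := funext hC
    rw [this]
    exact ((hWd x).const_mul c).sub (hZd x)
  have hW0 : W 0 = 1 / c := by
    rw [hW]; simp; field_simp
  have hpos : ∀ x, 0 < c * W' x - q * W x := by
    intro x
    have e1 := Real.exp_pos (γ₁ * x)
    have e2 := Real.exp_pos (γ₂ * x)
    have key : c * W' x - q * W x =
        ((mu + γ₁) * (c * γ₁ - q) * Real.exp (γ₁ * x)
          + (mu + γ₂) * (q - c * γ₂) * Real.exp (γ₂ * x)) / (c * (γ₁ - γ₂)) := by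
      rw [hW', hW]
      field_simp
      ring
    rw [key]
    apply div_pos _ hD
    have t1 : 0 < (mu + γ₁) * (c * γ₁ - q) * Real.exp (γ₁ * x) := by
      apply mul_pos (mul_pos (by linarith) (by linarith)) e1
    have t2 : 0 < (mu + γ₂) * (q - c * γ₂) * Real.exp (γ₂ * x) := by
      apply mul_pos (mul_pos hmug2 (by nlinarith)) e2
    linarith
  refine ⟨?_, ?_, ?_⟩
  · rw [hC, hZ, hW0, intervalIntegral.integral_same]
    field_simp
    ring
  · rw [(hCd 0).deriv, hW0]
    have : W' 0 = (mu + γ₁ + γ₂) / c := by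
      rw [hW']; simp; field_simp; ring
    rw [this]
    field_simp
    nlinarith [hsum]
  · exact (strictMono_of_hasDerivAt_pos hCd hpos).strictMonoOn _
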